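/- Let G be a monoid such that the map G × G → G × G, (x,y) ↦ (xy, x), is bijective. Then G is a group. -/
import Mathlib


theorem group_of_bijective_shear (G : Type*) [Monoid G]
    (h : Function.Bijective (fun p : G × G => (p.1 * p.2, p.1))) :
    ∀ x : G, ∃ y : G, x * y = 1 ∧ y * x = 1 := by
  have key : ∀ x : G, ∃ y : G, x * y = 1 := by
    intro x
    obtain ⟨p, hp⟩ := h.2 (1, x)
    simp only [Prod.ext_iff] at hp
    exact ⟨p.2, hp.2 ▸ hp.1⟩
  intro x
  obtain ⟨y, hy⟩ := key x
  obtain ⟨z, hz⟩ := key y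
  have : x = z := by
    calc x = x * (y * z) := by rw [hz, mul_one]
    _ = (x * y) * z := by rw [mul_assoc]
    _ = z := by rw [hy, one_mul]
  exact ⟨y, hy, this ▸ hz⟩
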